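/- arXiv:2002.02230 — 2 statements merged into one kernel-verified Lean document; each statement's English description precedes it below -/
import Mathlib

section
/- Let H be a complex Hilbert space and let A ∈ B₊(H). Then the range of A is one-dimensional if and only if the set {C ∈ B₊(H) : C ≪ A and A is not B-absolutely continuous with respect to C (i.e., ¬(A ≪ C))} equals {0}. -/
open ContinuousLinearMap Filter Topology

variable {H : Type} [NormedAddCommGroup H] [InnerProductSpace ℂ H] [CompleteSpace H]

/-- The Loewner order on bounded operators: `A ≤ B` iff `B - A` is positive. -/
def Loewner (A B : H →L[ℂ] H) : Prop := (B - A).IsPositive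

/-- `A` is `B`-absolutely continuous: `A` is the strong-operator-topology limit of a
monotone increasing sequence of positive operators, each dominated by a nonnegative
multiple of `B`. -/
def AbsCont (A B : H →L[ℂ] H) : Prop :=
  ∃ f : ℕ → H →L[ℂ] H,
    (∀ n, (f n).IsPositive) ∧
    (∀ m n, m ≤ n → Loewner (f m) (f n)) ∧
    (∀ n, ∃ c : ℝ, 0 ≤ c ∧ Loewner (f n) (c • B)) ∧
    (∀ x : H, Tendsto (fun n => f n x) atTop (𝓝 (A x)))

/-- `A` and `B` are singular: the only positive operator below both (in the Loewner
order) is `0`. -/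
def Singular (A B : H →L[ℂ] H) : Prop :=
  ∀ C : H →L[ℂ] H, C.IsPositive → Loewner C A → Loewner C B → C = 0

/-- An operator range: a subspace which is the range of some bounded operator. -/
def IsOpRange (M : Submodule ℂ H) : Prop := ∃ S : H →L[ℂ] H, LinearMap.range (S : H →ₗ[ℂ] H) = M

set_option linter.unusedSectionVars false

local notation "⟪" x ", " y "⟫" => @inner ℂ _ _ x y

lemma sa_inner {T : H →L[ℂ] H} (hT : IsSelfAdjoint T) (x y : H) : ⟪T x, y⟫ = ⟪x, T y⟫ := by
  conv_lhs => rw [← (ContinuousLinearMap.isSelfAdjoint_iff'.mp hT)]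
  exact ContinuousLinearMap.adjoint_inner_left T y x

lemma op_real_smul (c : ℝ) (T : H →L[ℂ] H) : c • T = (c : ℂ) • T :=
  RCLike.real_smul_eq_coe_smul c T

lemma pos_quadratic {T : H →L[ℂ] H} (hT : T.IsPositive) (x y : H) (t : ℝ) :
    0 ≤ (⟪T y, y⟫).re * (t * t) + (2 * (⟪T x, y⟫).re) * t + (⟪T x, x⟫).re := by
  have h := hT.2 (x + (t : ℂ) • y)
  rw [ContinuousLinearMap.reApplyInnerSelf] at h
  have hyx : ⟪T y, x⟫ = starRingEnd ℂ ⟪T x, y⟫ := by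
    rw [sa_inner hT.isSelfAdjoint y x, inner_conj_symm]
  simp only [map_add, map_smul, inner_add_left, inner_add_right, inner_smul_left,
    inner_smul_right, hyx] at h
  simp only [Complex.add_re, Complex.mul_re, Complex.conj_re, Complex.conj_im,
    Complex.ofReal_re, Complex.ofReal_im, RCLike.re_to_complex] at h ⊢
  nlinarith [h]

lemma pos_cs {T : H →L[ℂ] H} (hT : T.IsPositive) (x y : H) :
    ‖⟪T x, y⟫‖ ^ 2 ≤ (⟪T x, x⟫).re * (⟪T y, y⟫).re := by
  rcases eq_or_ne (⟪T x, y⟫ : ℂ) 0 with hz | hz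
  · rw [hz]
    simpa [ContinuousLinearMap.reApplyInnerSelf] using mul_nonneg (hT.2 x) (hT.2 y)
  · set z : ℂ := ⟪T x, y⟫ with hzdef
    set θ : ℂ := (starRingEnd ℂ z) / (‖z‖ : ℂ) with hθ
    have hnz : (‖z‖ : ℂ) ≠ 0 := by
      simpa using norm_ne_zero_iff.mpr hz
    have hθnorm : ‖θ‖ = 1 := by
      rw [hθ, norm_div, RCLike.norm_conj]
      rw [Complex.norm_real, Real.norm_eq_abs, abs_norm,
        div_self (norm_ne_zero_iff.mpr hz)]
    have key : ∀ t : ℝ, 0 ≤ (⟪T y, y⟫).re * (t * t) + (2 * ‖z‖) * t + (⟪T x, x⟫).re := by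
      intro t
      have h := pos_quadratic hT x (θ • y) t
      have h1 : ⟪T x, θ • y⟫ = (‖z‖ : ℂ) := by
        rw [inner_smul_right, hθ, ← hzdef]
        rw [div_mul_eq_mul_div, mul_comm, Complex.mul_conj, eq_comm,
          eq_div_iff hnz, Complex.normSq_eq_norm_sq]
        norm_cast
        rw [sq]
      have h2 : ⟪T (θ • y), θ • y⟫ = ⟪T y, y⟫ := by
        rw [map_smul, inner_smul_left, inner_smul_right, ← mul_assoc,
          Complex.conj_mul']
        norm_cast
        rw [hθnorm]
        simp
      rw [h1, h2] at h
      simpa using h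
    have hd := discrim_le_zero key
    rw [discrim] at hd
    nlinarith [hd]

lemma pos_app_eq_zero {T : H →L[ℂ] H} (hT : T.IsPositive) {x : H}
    (h : (⟪T x, x⟫).re = 0) : T x = 0 := by
  have hcs := pos_cs hT x (T x)
  rw [h] at hcs
  have : ‖⟪T x, T x⟫‖ ^ 2 ≤ 0 := by simpa using hcs
  have h0 : (⟪T x, T x⟫ : ℂ) = 0 := by
    have := norm_eq_zero.mp (by nlinarith [norm_nonneg (⟪T x, T x⟫ : ℂ), this])
    exact this
  exact inner_self_eq_zero.mp h0

/-- Rank one positive operator `x ↦ ⟪w, x⟫ • w`. -/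
noncomputable def Rk (w : H) : H →L[ℂ] H := (innerSL ℂ w).smulRight w

@[simp] lemma Rk_apply (w x : H) : Rk w x = ⟪w, x⟫ • w := rfl

lemma Rk_pos (w : H) : (Rk w).IsPositive := by
  constructor
  · rw [← ContinuousLinearMap.isSelfAdjoint_iff_isSymmetric, ContinuousLinearMap.isSelfAdjoint_iff']
    refine Eq.symm ((ContinuousLinearMap.eq_adjoint_iff _ _).mpr fun x y => ?_)
    simp only [Rk_apply, inner_smul_left, inner_smul_right, inner_conj_symm]
    ring
  · intro x
    rw [ContinuousLinearMap.reApplyInnerSelf]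
    simp only [Rk_apply, inner_smul_left, Complex.conj_mul']
    have : RCLike.re ((‖⟪w, x⟫‖ : ℂ) ^ 2) = ‖⟪w, x⟫‖ ^ 2 := by
      norm_cast
    rw [this]
    positivity

lemma loewner_re {C D : H →L[ℂ] H} (h : Loewner C D) (x : H) :
    (⟪C x, x⟫).re ≤ (⟪D x, x⟫).re := by
  have h1 := h.2 x
  rw [ContinuousLinearMap.reApplyInnerSelf] at h1
  have : (⟪(D - C) x, x⟫ : ℂ) = ⟪D x, x⟫ - ⟪C x, x⟫ := by
    simp [ContinuousLinearMap.sub_apply, inner_sub_left]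
  rw [this] at h1
  simp only [RCLike.re_to_complex, Complex.sub_re] at h1
  linarith

lemma dominated_rank_one {C : H →L[ℂ] H} (hC : C.IsPositive) {w : H} (hw : w ≠ 0)
    {c : ℝ} (h : Loewner C ((c : ℂ) • Rk w)) :
    ∃ μ : ℝ, 0 ≤ μ ∧ C = (μ : ℂ) • Rk w := by
  have hww : (⟪w, w⟫ : ℂ) = ((‖w‖ : ℂ)) ^ 2 := inner_self_eq_norm_sq_to_K w
  have hnw : (0 : ℝ) < ‖w‖ ^ 2 := pow_pos (norm_pos_iff.mpr hw) 2
  have hww0 : (⟪w, w⟫ : ℂ) ≠ 0 := inner_self_ne_zero.mpr hw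
  -- C vanishes on the orthogonal complement of w
  have hker : ∀ x : H, ⟪w, x⟫ = 0 → C x = 0 := by
    intro x hx
    apply pos_app_eq_zero hC
    have h1 := loewner_re h x
    have h2 : (⟪((c : ℂ) • Rk w) x, x⟫ : ℂ) = 0 := by
      simp [ContinuousLinearMap.smul_apply, inner_smul_left, inner_smul_right, hx]
    rw [h2] at h1
    simp only [Complex.zero_re] at h1
    exact le_antisymm h1 (hC.2 x)
  -- decomposition
  have hCx : ∀ x : H, C x = (⟪w, x⟫ / ⟪w, w⟫) • C w := by
    intro x
    have hx' : ⟪w, x - (⟪w, x⟫ / ⟪w, w⟫) • w⟫ = (0 : ℂ) := by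
      rw [inner_sub_right, inner_smul_right, div_mul_cancel₀ _ hww0, sub_self]
    have h0 := hker _ hx'
    rw [map_sub, map_smul, sub_eq_zero] at h0
    simpa using h0
  -- C w is a multiple of w
  have hsym : (⟪C w, w⟫ : ℂ) = ⟪w, C w⟫ := sa_inner hC.isSelfAdjoint w w
  have hreal : (starRingEnd ℂ) (⟪C w, w⟫ : ℂ) = ⟪C w, w⟫ := by
    rw [inner_conj_symm, ← hsym]
  have hCw : C w = (⟪C w, w⟫ / ⟪w, w⟫) • w := by
    apply ext_inner_right ℂ
    intro u
    have hu' : ⟪w, u - (⟪w, u⟫ / ⟪w, w⟫) • w⟫ = (0 : ℂ) := by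
      rw [inner_sub_right, inner_smul_right, div_mul_cancel₀ _ hww0, sub_self]
    have hCu := hker _ hu'
    have e1 : (⟪C w, u - (⟪w, u⟫ / ⟪w, w⟫) • w⟫ : ℂ) = 0 := by
      rw [sa_inner hC.isSelfAdjoint, hCu, inner_zero_right]
    rw [inner_sub_right, inner_smul_right, sub_eq_zero] at e1
    rw [e1, inner_smul_left]
    have hwwreal : (starRingEnd ℂ) (⟪w, w⟫ : ℂ) = ⟪w, w⟫ := inner_conj_symm w w
    rw [map_div₀, hreal, hwwreal]
    ring
  -- assemble
  set μ : ℝ := (⟪C w, w⟫ : ℂ).re / (‖w‖ ^ 2) ^ 2 with hμ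
  have hCww : (⟪C w, w⟫ : ℂ) = ((⟪C w, w⟫ : ℂ).re : ℂ) :=
    (Complex.conj_eq_iff_re.mp hreal).symm
  refine ⟨μ, ?_, ?_⟩
  · have := hC.2 w
    rw [ContinuousLinearMap.reApplyInnerSelf] at this
    exact div_nonneg this (by positivity)
  · ext x
    rw [ContinuousLinearMap.smul_apply, Rk_apply, hCx x, hCw]
    rw [smul_smul, smul_smul, hCww]
    congr 1
    rw [hμ, hww]
    push_cast
    have : (‖w‖ : ℂ) ≠ 0 := by simpa using (norm_ne_zero_iff.mpr hw)
    field_simp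

lemma loewner_refl (A : H →L[ℂ] H) : Loewner A A := by
  unfold Loewner
  rw [sub_self]
  exact ContinuousLinearMap.isPositive_zero

lemma absCont_of_le {A B : H →L[ℂ] H} (hA : A.IsPositive) {c : ℝ} (hc : 0 ≤ c)
    (h : Loewner A (c • B)) : AbsCont A B :=
  ⟨fun _ => A, fun _ => hA, fun _ _ _ => loewner_refl A, fun _ => ⟨c, hc, h⟩,
    fun _ => tendsto_const_nhds⟩

lemma absCont_zero_left (B : H →L[ℂ] H) : AbsCont 0 B := by
  refine ⟨fun _ => 0, fun _ => ContinuousLinearMap.isPositive_zero,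
    fun _ _ _ => loewner_refl 0, fun _ => ⟨0, le_refl 0, ?_⟩, fun x => ?_⟩
  · unfold Loewner
    rw [zero_smul, sub_zero]
    exact ContinuousLinearMap.isPositive_zero
  · exact tendsto_const_nhds

lemma absCont_zero_right {A : H →L[ℂ] H} (h : AbsCont A 0) : A = 0 := by
  obtain ⟨f, hpos, -, hbdd, hlim⟩ := h
  have hz : ∀ n x, f n x = 0 := by
    intro n x
    obtain ⟨c, -, hL⟩ := hbdd n
    rw [smul_zero] at hL
    have h1 := loewner_re hL x
    have h2 : (⟪(0 : H →L[ℂ] H) x, x⟫ : ℂ) = 0 := by simp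
    rw [h2] at h1
    simp only [Complex.zero_re] at h1
    exact pos_app_eq_zero (hpos n) (le_antisymm h1 ((hpos n).2 x))
  ext x
  have : Tendsto (fun n => f n x) atTop (𝓝 (0 : H)) := by
    simp only [hz]
    exact tendsto_const_nhds
  have := tendsto_nhds_unique (hlim x) this
  simpa using this

lemma absCont_rank_one {X B : H →L[ℂ] H} {w : H} (hw : w ≠ 0) {s : ℝ}
    (hB : B = (s : ℂ) • Rk w) (h : AbsCont X B) :
    ∃ z : ℝ, 0 ≤ z ∧ X = (z : ℂ) • Rk w := by
  obtain ⟨f, hpos, hmono, hbdd, hlim⟩ := h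
  have hmu : ∀ n, ∃ μ : ℝ, 0 ≤ μ ∧ f n = (μ : ℂ) • Rk w := by
    intro n
    obtain ⟨c, hc, hL⟩ := hbdd n
    have hcB : c • B = ((c * s : ℝ) : ℂ) • Rk w := by
      rw [hB, op_real_smul, smul_smul]
      push_cast
      ring_nf
    rw [hcB] at hL
    exact dominated_rank_one (hpos n) hw hL
  choose μ hμ0 hμ using hmu
  set k : ℂ := (‖w‖ : ℂ) ^ 2 * (‖w‖ : ℂ) ^ 2 with hk
  have hk0 : k ≠ 0 := by
    have h0 : (‖w‖ : ℂ) ≠ 0 := by simpa using norm_ne_zero_iff.mpr hw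
    rw [hk]
    exact mul_ne_zero (pow_ne_zero 2 h0) (pow_ne_zero 2 h0)
  have hww : (⟪w, w⟫ : ℂ) = (‖w‖ : ℂ) ^ 2 := inner_self_eq_norm_sq_to_K w
  have hfnw : ∀ n, (⟪w, f n w⟫ : ℂ) = (μ n : ℂ) * k := by
    intro n
    rw [hμ n]
    simp only [ContinuousLinearMap.smul_apply, Rk_apply, inner_smul_right, hww, hk]
  have hlim2 : Tendsto (fun n => (⟪w, f n w⟫ : ℂ)) atTop (𝓝 ⟪w, X w⟫) :=
    tendsto_const_nhds.inner (hlim w)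
  have hlim3 : Tendsto (fun n => (μ n : ℂ)) atTop (𝓝 (⟪w, X w⟫ / k)) := by
    have := hlim2.div_const k
    refine this.congr fun n => ?_
    rw [hfnw n, mul_div_cancel_right₀ _ hk0]
  set z₀ : ℂ := ⟪w, X w⟫ / k with hz₀
  have hre : Tendsto (fun n => μ n) atTop (𝓝 z₀.re) := by
    have := (Complex.continuous_re.tendsto z₀).comp hlim3
    exact this.congr fun n => by simp
  have him : z₀.im = 0 := by
    have h1 : Tendsto (fun n => ((μ n : ℂ)).im) atTop (𝓝 z₀.im) :=
      (Complex.continuous_im.tendsto z₀).comp hlim3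
    have h2 : Tendsto (fun n => ((μ n : ℂ)).im) atTop (𝓝 (0 : ℝ)) := by
      simp only [Complex.ofReal_im]
      exact tendsto_const_nhds
    exact tendsto_nhds_unique h1 h2
  have hz₀re : ((z₀.re : ℝ) : ℂ) = z₀ := by
    exact Complex.ext (by simp) (by simp [him])
  refine ⟨z₀.re, ge_of_tendsto hre (Eventually.of_forall hμ0), ?_⟩
  ext x
  have h1 : Tendsto (fun n => f n x) atTop (𝓝 (((z₀.re : ℝ) : ℂ) • Rk w x)) := by
    rw [hz₀re]
    refine (hlim3.smul_const (Rk w x)).congr fun n => ?_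
    rw [hμ n]
    simp
  exact tendsto_nhds_unique (hlim x) h1

lemma rank_one_structure {A : H →L[ℂ] H} (hA : A.IsPositive)
    (h1 : Module.finrank ℂ (LinearMap.range (A : H →ₗ[ℂ] H)) = 1) :
    ∃ (w : H) (s : ℝ), w ≠ 0 ∧ 0 < s ∧ A = (s : ℂ) • Rk w := by
  obtain ⟨v, hv0, hvspan⟩ := finrank_eq_one_iff'.mp h1
  have hw : (v : H) ≠ 0 := fun h => hv0 (Subtype.ext h)
  set w : H := (v : H) with hwdef
  obtain ⟨y₀, hy₀⟩ := LinearMap.mem_range.mp v.2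
  set d : ℂ := ⟪A y₀, y₀⟫ with hd
  have hdreal : (starRingEnd ℂ) d = d := by
    rw [hd, inner_conj_symm, ← sa_inner hA.isSelfAdjoint]
  have hdre : d = ((d.re : ℝ) : ℂ) := (Complex.conj_eq_iff_re.mp hdreal).symm
  have hdre0 : 0 < d.re := by
    rcases lt_or_eq_of_le (hA.2 y₀) with h | h
    · exact h
    · exfalso
      apply hw
      rw [hwdef, ← hy₀]
      exact pos_app_eq_zero hA (by exact h.symm)
  refine ⟨w, (d.re)⁻¹, hw, by positivity, ?_⟩
  ext x
  obtain ⟨cx, hcx⟩ := hvspan ⟨A x, LinearMap.mem_range.mpr ⟨x, rfl⟩⟩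
  have hcx' : cx • w = A x := congrArg Subtype.val hcx
  have key : (starRingEnd ℂ) cx * d = ⟪x, w⟫ := by
    have e1 : (⟪A x, y₀⟫ : ℂ) = ⟪x, w⟫ := by
      rw [sa_inner hA.isSelfAdjoint]
      exact congrArg _ hy₀
    rw [← e1, ← hcx', inner_smul_left, hwdef, ← hy₀]
    rfl
  have hd0 : d ≠ 0 := by
    rw [hdre]
    exact_mod_cast ne_of_gt hdre0
  have hcxval : cx = ⟪w, x⟫ / d := by
    have h2 := congrArg (starRingEnd ℂ) key
    rw [map_mul, RingHomCompTriple.comp_apply, hdreal, inner_conj_symm] at h2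
    rw [eq_div_iff hd0]
    exact h2
  rw [ContinuousLinearMap.smul_apply, Rk_apply, ← hcx', hcxval, smul_smul]
  congr 1
  rw [div_eq_mul_inv, mul_comm]
  congr 1
  rw [hdre]
  norm_cast

/-- A positive operator `A` has one-dimensional range iff the only
positive `C` with `C ≪ A` and `¬(A ≪ C)` is `C = 0`. -/
theorem stmt6 (A : H →L[ℂ] H) (hA : A.IsPositive) :
    Module.finrank ℂ (LinearMap.range (A : H →ₗ[ℂ] H)) = 1 ↔
      {C : H →L[ℂ] H | C.IsPositive ∧ AbsCont C A ∧ ¬ AbsCont A C} = {0} := by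
  constructor
  · intro h1
    obtain ⟨w, s, hw, hs, hA'⟩ := rank_one_structure hA h1
    ext C
    simp only [Set.mem_setOf_eq, Set.mem_singleton_iff]
    constructor
    · rintro ⟨hCpos, hCA, hnAC⟩
      obtain ⟨z, hz0, hC⟩ := absCont_rank_one hw hA' hCA
      rcases eq_or_lt_of_le hz0 with hz | hz
      · rw [hC, ← hz]
        simp
      · exfalso
        apply hnAC
        apply absCont_of_le hA (c := s / z) (le_of_lt (div_pos hs hz))
        have heq : (s / z : ℝ) • C = A := by
          rw [hC, hA', op_real_smul, smul_smul]
          congr 1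
          push_cast
          rw [div_mul_cancel₀ _ (show (z:ℂ) ≠ 0 by exact_mod_cast ne_of_gt hz)]
        rw [heq]
        exact loewner_refl A
    · rintro rfl
      refine ⟨ContinuousLinearMap.isPositive_zero, absCont_zero_left A, fun hc => ?_⟩
      have hA0 := absCont_zero_right hc
      have hAw : A w ≠ 0 := by
        rw [hA']
        simp only [ContinuousLinearMap.smul_apply, Rk_apply]
        exact smul_ne_zero (by exact_mod_cast ne_of_gt hs)
          (smul_ne_zero (inner_self_ne_zero.mpr hw) hw)
      apply hAw
      rw [hA0]
      simp
  · intro h2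
    have h0mem : (0 : H →L[ℂ] H) ∈
        {C : H →L[ℂ] H | C.IsPositive ∧ AbsCont C A ∧ ¬ AbsCont A C} := by
      rw [h2]
      exact Set.mem_singleton 0
    obtain ⟨-, -, hnA0⟩ := h0mem
    have hAne : A ≠ 0 := by
      intro h
      exact hnA0 (h ▸ absCont_zero_left (0 : H →L[ℂ] H))
    obtain ⟨e, he⟩ : ∃ e, A e ≠ 0 := by
      by_contra h
      push_neg at h
      exact hAne (ContinuousLinearMap.ext fun x => by simp [h x])
    set w : H := A e with hwdef
    have hw : w ≠ 0 := he
    set c : ℝ := (⟪A e, e⟫ : ℂ).re with hc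
    have hc0 : 0 ≤ c := hA.2 e
    have hLoew : Loewner (Rk w) (c • A) := by
      rw [op_real_smul]
      constructor
      · exact ContinuousLinearMap.isSelfAdjoint_iff_isSymmetric.mp ((IsSelfAdjoint.smul (isSelfAdjoint_iff.mpr (Complex.conj_ofReal c) : IsSelfAdjoint ((c : ℂ))) hA.isSelfAdjoint).sub (Rk_pos w).isSelfAdjoint)
      · intro x
        rw [ContinuousLinearMap.reApplyInnerSelf]
        have e1 : (⟪((c : ℂ) • A - Rk w) x, x⟫ : ℂ)
            = (c : ℂ) * ⟪A x, x⟫ - ⟪Rk w x, x⟫ := by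
          rw [ContinuousLinearMap.sub_apply, ContinuousLinearMap.smul_apply,
            inner_sub_left, inner_smul_left, Complex.conj_ofReal]
        have e2 : ((⟪((c : ℂ) • A - Rk w) x, x⟫ : ℂ)).re
            = c * (⟪A x, x⟫ : ℂ).re - (⟪Rk w x, x⟫ : ℂ).re := by
          rw [e1]
          simp [Complex.sub_re, Complex.mul_re]
        have e3 : (⟪Rk w x, x⟫ : ℂ).re = ‖(⟪w, x⟫ : ℂ)‖ ^ 2 := by
          simp only [Rk_apply, inner_smul_left, Complex.conj_mul']
          norm_cast
        have e4 : ‖(⟪w, x⟫ : ℂ)‖ = ‖(⟪A x, e⟫ : ℂ)‖ := by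
          rw [hwdef, sa_inner hA.isSelfAdjoint, norm_inner_symm]
        have e5 := pos_cs hA x e
        have : ‖(⟪w, x⟫ : ℂ)‖ ^ 2 ≤ (⟪A x, x⟫ : ℂ).re * c := by
          rw [e4, hc]
          exact e5
        rw [show RCLike.re (⟪((c : ℂ) • A - Rk w) x, x⟫ : ℂ)
            = ((⟪((c : ℂ) • A - Rk w) x, x⟫ : ℂ)).re from rfl, e2, e3]
        linarith [this, mul_comm c ((⟪A x, x⟫ : ℂ)).re]
    have hCA : AbsCont (Rk w) A := absCont_of_le (Rk_pos w) hc0 hLoew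
    have hRkne : Rk w ≠ 0 := by
      intro h
      have : Rk w w = 0 := by rw [h]; rfl
      rw [Rk_apply] at this
      exact hw (by simpa [inner_self_ne_zero.mpr hw] using
        (smul_eq_zero.mp this).resolve_left (inner_self_ne_zero.mpr hw))
    have hAC : AbsCont A (Rk w) := by
      by_contra hn
      have hmem : Rk w ∈
          {C : H →L[ℂ] H | C.IsPositive ∧ AbsCont C A ∧ ¬ AbsCont A C} :=
        ⟨Rk_pos w, hCA, hn⟩
      rw [h2] at hmem
      exact hRkne hmem
    obtain ⟨z, hz0, hA'⟩ := absCont_rank_one hw (B := Rk w) (one_smul ℂ (Rk w)).symm hAC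
    have hrange : LinearMap.range (A : H →ₗ[ℂ] H) = Submodule.span ℂ {w} := by
      apply le_antisymm
      · rintro y ⟨x, rfl⟩
        rw [hA']
        simp only [ContinuousLinearMap.coe_coe, ContinuousLinearMap.smul_apply, Rk_apply]
        exact Submodule.smul_mem _ _
          (Submodule.smul_mem _ _ (Submodule.mem_span_singleton_self w))
      · rw [Submodule.span_le, Set.singleton_subset_iff]
        exact LinearMap.mem_range.mpr ⟨e, rfl⟩
    rw [hrange]
    exact finrank_span_singleton hw
end

section
/- Let H be a complex Hilbert space and let φ : B₊(H) → B₊(H) be a bijective map that preserves singularity in both directions. Then for all A, B ∈ B₊(H): ran A^{1/2} = ran B^{1/2} if and only if ran φ(A)^{1/2} = ran φ(B)^{1/2}. -/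
set_option synthInstance.maxHeartbeats 1000000
set_option maxHeartbeats 1000000

open ContinuousLinearMap Filter Topology

variable {H : Type} [NormedAddCommGroup H] [InnerProductSpace ℂ H] [CompleteSpace H]

/-! ### Auxiliary lemmas -/

set_option linter.unusedSectionVars false

local notation "⟪" x ", " y "⟫" => @inner ℂ _ _ x y

lemma sqrt_isPositive {A : H →L[ℂ] H} (_hA : A.IsPositive) : (CFC.sqrt A).IsPositive :=
  (nonneg_iff_isPositive _).1 (CFC.sqrt_nonneg _)

lemma sqrt_apply_sqrt {A : H →L[ℂ] H} (hA : A.IsPositive) (y : H) :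
    CFC.sqrt A (CFC.sqrt A y) = A y := by
  conv_rhs => rw [← CFC.sqrt_mul_sqrt_self A ((nonneg_iff_isPositive A).2 hA)]
  rw [ContinuousLinearMap.mul_apply]

lemma sqrt_symm {A : H →L[ℂ] H} (hA : A.IsPositive) (u w : H) :
    ⟪CFC.sqrt A u, w⟫ = ⟪u, CFC.sqrt A w⟫ :=
  ((sqrt_isPositive hA).1) u w

lemma inner_eq_sqrt {A : H →L[ℂ] H} (hA : A.IsPositive) (y : H) :
    ⟪A y, y⟫ = ⟪CFC.sqrt A y, CFC.sqrt A y⟫ := by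
  rw [← sqrt_apply_sqrt hA y]
  exact sqrt_symm hA _ _

lemma re_inner_eq_norm_sqrt {A : H →L[ℂ] H} (hA : A.IsPositive) (y : H) :
    RCLike.re ⟪A y, y⟫ = ‖CFC.sqrt A y‖ ^ 2 := by
  rw [inner_eq_sqrt hA y, inner_self_eq_norm_sq]

lemma eq_zero_of_sqrt_eq_zero {A : H →L[ℂ] H} (hA : A.IsPositive)
    (h : ∀ y, CFC.sqrt A y = 0) : A = 0 := by
  have h' : CFC.sqrt A = 0 := ContinuousLinearMap.ext h
  conv_lhs => rw [← CFC.sqrt_mul_sqrt_self A ((nonneg_iff_isPositive A).2 hA), h', zero_mul]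

/-- Douglas-type characterization of the range of the square root. -/
lemma mem_range_sqrt_iff {A : H →L[ℂ] H} (hA : A.IsPositive) (x : H) :
    x ∈ Set.range ⇑(CFC.sqrt A) ↔
      ∃ M : ℝ, 0 ≤ M ∧ ∀ y, ‖⟪x, y⟫‖ ≤ M * ‖CFC.sqrt A y‖ := by
  set T := CFC.sqrt A with hT
  have hsymm : ∀ u w : H, ⟪T u, w⟫ = ⟪u, T w⟫ := sqrt_symm hA
  constructor
  · rintro ⟨u, rfl⟩
    refine ⟨‖u‖, norm_nonneg u, fun y => ?_⟩
    rw [hsymm]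
    exact norm_inner_le_norm u (T y)
  · rintro ⟨M, hM, hbound⟩
    have hwd : ∀ y y' : H, T y = T y' → ⟪x, y⟫ = ⟪x, y'⟫ := by
      intro y y' h
      have h0 : ‖⟪x, y - y'⟫‖ ≤ M * ‖T (y - y')‖ := hbound _
      rw [map_sub, h, sub_self, norm_zero, mul_zero] at h0
      have h1 : ⟪x, y - y'⟫ = 0 := norm_le_zero_iff.1 h0
      rwa [inner_sub_right, sub_eq_zero] at h1
    set p : Submodule ℂ H := LinearMap.range (T : H →ₗ[ℂ] H) with hp
    have hmem : ∀ z : p, ∃ y, T y = (z : H) := fun z => LinearMap.mem_range.1 z.2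
    have hpick : ∀ z : p, T ((hmem z).choose) = (z : H) := fun z => (hmem z).choose_spec
    let f₀ : p →ₗ[ℂ] ℂ :=
      { toFun := fun z => ⟪x, (hmem z).choose⟫
        map_add' := by
          intro z w
          have h : T ((hmem (z + w)).choose) = T ((hmem z).choose + (hmem w).choose) := by
            rw [map_add, hpick, hpick, hpick]; rfl
          show ⟪x, (hmem (z + w)).choose⟫ = ⟪x, (hmem z).choose⟫ + ⟪x, (hmem w).choose⟫
          rw [hwd _ _ h, inner_add_right]
        map_smul' := by
          intro c z
          have h : T ((hmem (c • z)).choose) = T (c • (hmem z).choose) := by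
            rw [map_smul, hpick, hpick]; rfl
          show ⟪x, (hmem (c • z)).choose⟫ = (RingHom.id ℂ) c • ⟪x, (hmem z).choose⟫
          rw [hwd _ _ h, inner_smul_right]; rfl }
    have hf₀ : ∀ z : p, ‖f₀ z‖ ≤ M * ‖z‖ := by
      intro z
      have h := hbound ((hmem z).choose)
      rw [hpick] at h
      exact h
    obtain ⟨g, hg, -⟩ := exists_extension_norm_eq p (LinearMap.mkContinuous f₀ M hf₀)
    set u := (InnerProductSpace.toDual ℂ H).symm g with hu
    have hgu : ∀ w : H, ⟪u, w⟫ = g w := fun w => InnerProductSpace.toDual_symm_apply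
    have key : ∀ w : H, ⟪T u, w⟫ = ⟪x, w⟫ := by
      intro w
      have hzmem : T w ∈ p := LinearMap.mem_range.2 ⟨w, rfl⟩
      have h2 : g (T w) = f₀ ⟨T w, hzmem⟩ := hg ⟨T w, hzmem⟩
      have h3 : (f₀ ⟨T w, hzmem⟩ : ℂ) = ⟪x, w⟫ := hwd _ _ (hpick ⟨T w, hzmem⟩)
      rw [hsymm, hgu (T w), h2, h3]
    exact ⟨u, ext_inner_right ℂ key⟩

lemma norm_sqrt_le {A B : H →L[ℂ] H} (hA : A.IsPositive) (hB : B.IsPositive)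
    (h : Loewner A B) (y : H) : ‖CFC.sqrt A y‖ ≤ ‖CFC.sqrt B y‖ := by
  have h0 := h.2 y
  rw [ContinuousLinearMap.reApplyInnerSelf_apply, ContinuousLinearMap.sub_apply,
    inner_sub_left, map_sub] at h0
  have h1 : ‖CFC.sqrt A y‖ ^ 2 ≤ ‖CFC.sqrt B y‖ ^ 2 := by
    rw [← re_inner_eq_norm_sqrt hA, ← re_inner_eq_norm_sqrt hB]
    linarith
  exact (pow_le_pow_iff_left₀ (norm_nonneg _) (norm_nonneg _) two_ne_zero).1 h1

lemma range_sqrt_mono {A B : H →L[ℂ] H} (hA : A.IsPositive) (hB : B.IsPositive)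
    (h : Loewner A B) : Set.range ⇑(CFC.sqrt A) ⊆ Set.range ⇑(CFC.sqrt B) := by
  intro x hx
  rw [mem_range_sqrt_iff hA] at hx
  obtain ⟨M, hM, hb⟩ := hx
  rw [mem_range_sqrt_iff hB]
  exact ⟨M, hM, fun y => (hb y).trans
    (mul_le_mul_of_nonneg_left (norm_sqrt_le hA hB h y) hM)⟩

lemma inner_real_smul_left' (r : ℝ) (v y : H) : ⟪r • v, y⟫ = r • ⟪v, y⟫ := by
  rw [RCLike.real_smul_eq_coe_smul (K := ℂ), inner_smul_left, RCLike.conj_ofReal,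
    RCLike.real_smul_eq_coe_mul]

lemma inner_real_smul_right' (r : ℝ) (v y : H) : ⟪y, r • v⟫ = r • ⟪y, v⟫ := by
  rw [RCLike.real_smul_eq_coe_smul (K := ℂ), inner_smul_right, RCLike.real_smul_eq_coe_mul]

noncomputable def rankOne (x : H) : H →L[ℂ] H := (innerSL ℂ x).smulRight x

lemma rankOne_apply (x y : H) : rankOne x y = ⟪x, y⟫ • x := rfl

lemma rankOne_symmetric (x : H) : ((rankOne x : H →L[ℂ] H) : H →ₗ[ℂ] H).IsSymmetric := by
  intro y z
  simp only [ContinuousLinearMap.coe_coe, rankOne_apply, inner_smul_left, inner_smul_right,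
    inner_conj_symm]
  ring

lemma re_inner_rankOne (x y : H) : RCLike.re ⟪rankOne x y, y⟫ = ‖⟪x, y⟫‖ ^ 2 := by
  rw [rankOne_apply, inner_smul_left, RCLike.conj_mul]
  norm_cast

lemma rankOne_isPositive (x : H) : (rankOne x).IsPositive := by
  refine ⟨rankOne_symmetric x, fun y => ?_⟩
  rw [ContinuousLinearMap.reApplyInnerSelf_apply, re_inner_rankOne]
  positivity

lemma smul_symmetric {T : H →L[ℂ] H} (hT : (T : H →ₗ[ℂ] H).IsSymmetric) (c : ℝ) :
    (((c • T : H →L[ℂ] H)) : H →ₗ[ℂ] H).IsSymmetric := by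
  have hT' : ∀ a b : H, ⟪T a, b⟫ = ⟪a, T b⟫ := fun a b => hT a b
  intro y z
  have h1 : (c • T) y = c • T y := rfl
  have h2 : (c • T) z = c • T z := rfl
  simp only [ContinuousLinearMap.coe_coe, h1, h2, inner_real_smul_left', inner_real_smul_right']
  rw [hT' y z]

lemma smul_isPositive {T : H →L[ℂ] H} (hT : T.IsPositive) {c : ℝ} (hc : 0 ≤ c) :
    (c • T).IsPositive := by
  refine ⟨smul_symmetric hT.1 c, fun y => ?_⟩
  rw [ContinuousLinearMap.reApplyInnerSelf_apply]
  have h1 : (c • T) y = c • T y := rfl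
  rw [h1, inner_real_smul_left', RCLike.smul_re]
  exact mul_nonneg hc (hT.2 y)

/-- The main Loewner domination lemma for rank-one operators. -/
lemma loewner_smul_rankOne {A : H →L[ℂ] H} (hA : A.IsPositive) {u x : H}
    (hux : CFC.sqrt A u = x) {c : ℝ} (hc : 0 < c) (hcu : ‖u‖ ^ 2 ≤ c) :
    Loewner (c⁻¹ • rankOne x) A := by
  refine ⟨?_, fun y => ?_⟩
  · have hs : ((A - c⁻¹ • rankOne x : H →L[ℂ] H) : H →ₗ[ℂ] H).IsSymmetric := by
      intro y z
      have h1 : (A - c⁻¹ • rankOne x) y = A y - c⁻¹ • rankOne x y := rfl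
      have h2 : (A - c⁻¹ • rankOne x) z = A z - c⁻¹ • rankOne x z := rfl
      simp only [ContinuousLinearMap.coe_coe, h1, h2, inner_sub_left, inner_sub_right,
        inner_real_smul_left', inner_real_smul_right']
      have hA' : ∀ a b : H, ⟪A a, b⟫ = ⟪a, A b⟫ :=
        fun a b => hA.1 a b
      have hR' : ∀ a b : H, ⟪rankOne x a, b⟫ = ⟪a, rankOne x b⟫ :=
        fun a b => rankOne_symmetric x a b
      rw [hA' y z, hR' y z]
    exact hs
  · rw [ContinuousLinearMap.reApplyInnerSelf_apply]
    have h1 : (A - c⁻¹ • rankOne x) y = A y - c⁻¹ • rankOne x y := rfl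
    rw [h1, inner_sub_left, map_sub, inner_real_smul_left', RCLike.smul_re,
      re_inner_rankOne]
    have h2 : ‖⟪x, y⟫‖ ^ 2 ≤ c * RCLike.re ⟪A y, y⟫ := by
      subst hux
      calc ‖⟪CFC.sqrt A u, y⟫‖ ^ 2 = ‖⟪u, CFC.sqrt A y⟫‖ ^ 2 := by rw [sqrt_symm hA]
        _ ≤ (‖u‖ * ‖CFC.sqrt A y‖) ^ 2 := by
            have := norm_inner_le_norm (𝕜 := ℂ) u (CFC.sqrt A y)
            exact pow_le_pow_left₀ (norm_nonneg _) this 2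
        _ = ‖u‖ ^ 2 * ‖CFC.sqrt A y‖ ^ 2 := mul_pow _ _ 2
        _ ≤ c * ‖CFC.sqrt A y‖ ^ 2 := mul_le_mul_of_nonneg_right hcu (sq_nonneg _)
        _ = c * RCLike.re ⟪A y, y⟫ := by rw [re_inner_eq_norm_sqrt hA]
    have h3 : c⁻¹ * ‖⟪x, y⟫‖ ^ 2 ≤ RCLike.re ⟪A y, y⟫ := by
      rw [inv_mul_le_iff₀ hc]
      exact h2
    linarith

lemma rankOne_smul_ne_zero {x : H} (hx : x ≠ 0) {c : ℝ} (hc : 0 < c) :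
    (c⁻¹ • rankOne x : H →L[ℂ] H) ≠ 0 := by
  intro h
  have h0 : (c⁻¹ • rankOne x) x = 0 := by rw [h]; rfl
  have h1 : (c⁻¹ • rankOne x) x = c⁻¹ • ⟪x, x⟫ • x := rfl
  rw [h1] at h0
  rcases smul_eq_zero.1 h0 with h2 | h2
  · exact absurd h2 (inv_ne_zero hc.ne')
  · rcases smul_eq_zero.1 h2 with h3 | h3
    · rw [inner_self_eq_zero] at h3; exact hx h3
    · exact hx h3

/-- Ando: two positive operators are singular iff the ranges of their square roots
intersect trivially. -/
lemma singular_iff_range {A B : H →L[ℂ] H} (hA : A.IsPositive) (hB : B.IsPositive) :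
    Singular A B ↔
      ∀ x, x ∈ Set.range ⇑(CFC.sqrt A) → x ∈ Set.range ⇑(CFC.sqrt B) → x = 0 := by
  constructor
  · intro hs x hxa hxb
    by_contra hx
    obtain ⟨u, hu⟩ := hxa
    obtain ⟨v, hv⟩ := hxb
    set c : ℝ := max (‖u‖ ^ 2) (‖v‖ ^ 2) with hcdef
    have hu0 : u ≠ 0 := by rintro rfl; rw [map_zero] at hu; exact hx hu.symm
    have hc : 0 < c := lt_max_of_lt_left (pow_pos (norm_pos_iff.2 hu0) 2)
    have hD := hs (c⁻¹ • rankOne x) (smul_isPositive (rankOne_isPositive x) (by positivity))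
      (loewner_smul_rankOne hA hu hc (le_max_left _ _))
      (loewner_smul_rankOne hB hv hc (le_max_right _ _))
    exact rankOne_smul_ne_zero hx hc hD
  · intro h C hC hCA hCB
    apply eq_zero_of_sqrt_eq_zero hC
    intro y
    exact h _ (range_sqrt_mono hC hA hCA ⟨y, rfl⟩) (range_sqrt_mono hC hB hCB ⟨y, rfl⟩)

lemma sqrt_rankOne {x : H} (hx : x ≠ 0) :
    CFC.sqrt (rankOne x) = (‖x‖⁻¹ : ℝ) • rankOne x := by
  have hn : (‖x‖ : ℂ) ≠ 0 := by exact_mod_cast (norm_ne_zero_iff.2 hx)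
  have h1 : (0 : H →L[ℂ] H) ≤ rankOne x := (nonneg_iff_isPositive _).2 (rankOne_isPositive x)
  have h2 : (0 : H →L[ℂ] H) ≤ (‖x‖⁻¹ : ℝ) • rankOne x :=
    (nonneg_iff_isPositive _).2 (smul_isPositive (rankOne_isPositive x) (by positivity))
  refine (CFC.sqrt_eq_iff _ _ h1 h2).2 ?_
  ext y
  rw [ContinuousLinearMap.mul_apply]
  show (‖x‖⁻¹ : ℝ) • rankOne x ((‖x‖⁻¹ : ℝ) • rankOne x y) = rankOne x y
  rw [ContinuousLinearMap.map_smul_of_tower, rankOne_apply, rankOne_apply,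
    inner_smul_right, inner_self_eq_norm_sq_to_K]
  match_scalars
  field_simp
  exact mul_div_cancel_left₀ _ hn

lemma mem_range_sqrt_rankOne {x : H} (hx : x ≠ 0) :
    x ∈ Set.range ⇑(CFC.sqrt (rankOne x)) := by
  have hn : (‖x‖ : ℂ) ≠ 0 := by exact_mod_cast (norm_ne_zero_iff.2 hx)
  refine ⟨(‖x‖⁻¹ : ℝ) • x, ?_⟩
  rw [sqrt_rankOne hx]
  show (‖x‖⁻¹ : ℝ) • rankOne x ((‖x‖⁻¹ : ℝ) • x) = x
  rw [ContinuousLinearMap.map_smul_of_tower, rankOne_apply, inner_self_eq_norm_sq_to_K]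
  match_scalars
  field_simp
  ring
  exact mul_inv_cancel₀ hn

lemma range_sqrt_rankOne_subset {x : H} (hx : x ≠ 0) {z : H}
    (hz : z ∈ Set.range ⇑(CFC.sqrt (rankOne x))) : ∃ a : ℂ, z = a • x := by
  obtain ⟨w, rfl⟩ := hz
  rw [sqrt_rankOne hx]
  refine ⟨(‖x‖⁻¹ : ℂ) * ⟪x, w⟫, ?_⟩
  show (‖x‖⁻¹ : ℝ) • rankOne x w = _
  rw [rankOne_apply, RCLike.real_smul_eq_coe_smul (K := ℂ), smul_smul]
  norm_cast

/-- Key step: the singularity relations with all positive operators determine the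
range of the square root. -/
lemma range_sqrt_subset_of_singular {A B : H →L[ℂ] H} (hA : A.IsPositive)
    (hB : B.IsPositive)
    (h : ∀ C : H →L[ℂ] H, C.IsPositive → (Singular C A ↔ Singular C B)) :
    Set.range ⇑(CFC.sqrt A) ⊆ Set.range ⇑(CFC.sqrt B) := by
  intro x hxa
  rcases eq_or_ne x 0 with rfl | hx
  · exact ⟨0, map_zero _⟩
  have hC : (rankOne x).IsPositive := rankOne_isPositive x
  have hnotA : ¬ Singular (rankOne x) A := fun hs =>
    hx ((singular_iff_range hC hA).1 hs x (mem_range_sqrt_rankOne hx) hxa)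
  have hnotB : ¬ Singular (rankOne x) B := fun hs => hnotA ((h _ hC).2 hs)
  rw [singular_iff_range hC hB] at hnotB
  push_neg at hnotB
  obtain ⟨z, hzC, hzB, hz0⟩ := hnotB
  obtain ⟨a, rfl⟩ := range_sqrt_rankOne_subset hx hzC
  have ha : a ≠ 0 := fun h0 => hz0 (by rw [h0, zero_smul])
  obtain ⟨t, ht⟩ := hzB
  refine ⟨a⁻¹ • t, ?_⟩
  rw [map_smul, ht, smul_smul, inv_mul_cancel₀ ha, one_smul]

lemma range_eq_iff_singular {A B : H →L[ℂ] H} (hA : A.IsPositive) (hB : B.IsPositive) :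
    Set.range ⇑(CFC.sqrt A) = Set.range ⇑(CFC.sqrt B) ↔
      ∀ C : H →L[ℂ] H, C.IsPositive → (Singular C A ↔ Singular C B) := by
  constructor
  · intro hr C hC
    rw [singular_iff_range hC hA, singular_iff_range hC hB, hr]
  · intro h
    exact Set.Subset.antisymm (range_sqrt_subset_of_singular hA hB h)
      (range_sqrt_subset_of_singular hB hA (fun C hC => (h C hC).symm))

/-- A bijection of the positive cone preserving singularity in both
directions preserves equality of ranges of square roots in both directions. -/
theorem stmt9 (φ : (H →L[ℂ] H) → (H →L[ℂ] H))
    (hbij : Set.BijOn φ {A | A.IsPositive} {A | A.IsPositive})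
    (hsing : ∀ A B : H →L[ℂ] H, A.IsPositive → B.IsPositive →
        (Singular A B ↔ Singular (φ A) (φ B))) :
    ∀ A B : H →L[ℂ] H, A.IsPositive → B.IsPositive →
      (Set.range ⇑(CFC.sqrt A) = Set.range ⇑(CFC.sqrt B) ↔
        Set.range ⇑(CFC.sqrt (φ A)) = Set.range ⇑(CFC.sqrt (φ B))) := by
  intro A B hA hB
  have hpA : (φ A).IsPositive := hbij.mapsTo hA
  have hpB : (φ B).IsPositive := hbij.mapsTo hB
  rw [range_eq_iff_singular hA hB, range_eq_iff_singular hpA hpB]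
  constructor
  · intro h C' hC'
    obtain ⟨C, hCmem, rfl⟩ := hbij.surjOn hC'
    have hC : C.IsPositive := hCmem
    rw [← hsing C A hC hA, ← hsing C B hC hB]
    exact h C hC
  · intro h C hC
    rw [hsing C A hC hA, hsing C B hC hB]
    exact h (φ C) (hbij.mapsTo hC)
end
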